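/- Let 0 < λ₁ ≤ λₙ be positive reals. The function ρ ↦ max{1/(1+ρλ₁), ρλₙ/(1+ρλₙ)} over ρ > 0 attains its minimum at ρ* = 1/√(λ₁λₙ), and the minimum value equals λₙ/(λₙ + √(λ₁λₙ)). -/

import Mathlib

theorem stmt_11 (l1 ln : ℝ) (h1 : 0 < l1) (h2 : l1 ≤ ln) :
    (∀ ρ : ℝ, 0 < ρ →
      max (1 / (1 + (1 / Real.sqrt (l1 * ln)) * l1))
          ((1 / Real.sqrt (l1 * ln)) * ln / (1 + (1 / Real.sqrt (l1 * ln)) * ln)) ≤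
        max (1 / (1 + ρ * l1)) (ρ * ln / (1 + ρ * ln))) ∧
    max (1 / (1 + (1 / Real.sqrt (l1 * ln)) * l1))
        ((1 / Real.sqrt (l1 * ln)) * ln / (1 + (1 / Real.sqrt (l1 * ln)) * ln)) =
      ln / (ln + Real.sqrt (l1 * ln)) := by
  have hln : 0 < ln := lt_of_lt_of_le h1 h2
  set s := Real.sqrt (l1 * ln) with hsdef
  have hs : 0 < s := Real.sqrt_pos.mpr (mul_pos h1 hln)
  have hs2 : s * s = l1 * ln := Real.mul_self_sqrt (mul_pos h1 hln).le
  have hval : max (1 / (1 + (1 / s) * l1)) ((1 / s) * ln / (1 + (1 / s) * ln))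
      = ln / (ln + s) := by
    have d1 : 0 < 1 + (1 / s) * l1 := by positivity
    have d2 : 0 < 1 + (1 / s) * ln := by positivity
    have d3 : 0 < ln + s := by positivity
    have e1 : 1 / (1 + (1 / s) * l1) = ln / (ln + s) := by
      rw [div_eq_div_iff d1.ne' d3.ne']
      field_simp
      nlinarith [hs2]
    have e2 : (1 / s) * ln / (1 + (1 / s) * ln) = ln / (ln + s) := by
      rw [div_eq_div_iff d2.ne' d3.ne']
      field_simp
      ring_nf
    rw [e1, e2, max_self]
  refine ⟨?_, hval⟩
  intro ρ hρ
  rw [hval]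
  have dρ1 : 0 < 1 + ρ * l1 := by positivity
  have dρ2 : 0 < 1 + ρ * ln := by positivity
  have d3 : 0 < ln + s := by positivity
  rcases le_total ρ (1 / s) with hc | hc
  · refine le_trans ?_ (le_max_left _ _)
    rw [div_le_div_iff₀ d3 dρ1]
    have : ρ * s ≤ 1 := by
      have := (le_div_iff₀ hs).mp hc; linarith
    nlinarith [hs2, hln.le]
  · refine le_trans ?_ (le_max_right _ _)
    rw [div_le_div_iff₀ d3 dρ2]
    have : 1 ≤ ρ * s := (div_le_iff₀ hs).mp hc
    nlinarith [hs2, hln.le]
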